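/- Let n ≥ 1 and let A be a real n×n matrix satisfying the cyclic non-increasing condition such that the whole vertex set {1,…,n} is the only strongly connected component of the graph 𝒢(A). Then the system Aᵀx = e has at most one solution, and if x is a solution, then either x_i < 0 for all i or x_i > 0 for all i. -/

import Mathlib

open Matrix BigOperators

/-- The cyclic non-increasing condition: each row of `A` weakly decreases
cyclically starting from the diagonal, i.e. `a_{i[j-1]} ≥ a_{ij}` for all
`j ≠ i` (indices in `Fin n`, arithmetic mod `n`). -/
def CyclicNonIncr {n : ℕ} [NeZero n] (A : Matrix (Fin n) (Fin n) ℝ) : Prop :=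
  ∀ i j : Fin n, j ≠ i → A i (j - 1) ≥ A i j

/-- The directed graph `𝒢(A)` has an edge from `i` to `j` iff `a_{i[j-1]} > a_{ij}`. -/
def GraphEdge {n : ℕ} [NeZero n] (A : Matrix (Fin n) (Fin n) ℝ) (i j : Fin n) : Prop :=
  A i (j - 1) > A i j

/-- `i` and `j` are strongly connected in `𝒢(A)`: there are directed paths
(possibly of length 0) from `i` to `j` and from `j` to `i`. -/
def Conn {n : ℕ} [NeZero n] (A : Matrix (Fin n) (Fin n) ℝ) (i j : Fin n) : Prop :=
  Relation.ReflTransGen (GraphEdge A) i j ∧ Relation.ReflTransGen (GraphEdge A) j i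

/-- `C` is a strongly connected component of `𝒢(A)`: an equivalence class of
the strong-connectivity relation. -/
def IsSCC {n : ℕ} [NeZero n] (A : Matrix (Fin n) (Fin n) ℝ) (C : Set (Fin n)) : Prop :=
  ∃ i, C = {j | Conn A i j}

/-- `C` is a closed SCC of `𝒢(A)`: an SCC with no edge leaving it. -/
def IsClosedSCC {n : ℕ} [NeZero n] (A : Matrix (Fin n) (Fin n) ℝ) (C : Set (Fin n)) : Prop :=
  IsSCC A C ∧ ∀ i ∈ C, ∀ j, GraphEdge A i j → j ∈ C

/-- `C` is an open SCC of `𝒢(A)`: an SCC with some edge leaving it. -/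
def IsOpenSCC {n : ℕ} [NeZero n] (A : Matrix (Fin n) (Fin n) ℝ) (C : Set (Fin n)) : Prop :=
  IsSCC A C ∧ ¬ (∀ i ∈ C, ∀ j, GraphEdge A i j → j ∈ C)

section aux
variable {n : ℕ} [NeZero n]

lemma sum_shift (A : Matrix (Fin n) (Fin n) ℝ) (i : Fin n) :
    ∑ j, A i (j - 1) = ∑ j, A i j :=
  Fintype.sum_equiv (Equiv.subRight (1 : Fin n)) _ _ (fun _ => rfl)

lemma sum_L (A : Matrix (Fin n) (Fin n) ℝ) (i : Fin n) :
    ∑ j, (A i (j - 1) - A i j) = 0 := by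
  rw [Finset.sum_sub_distrib, sum_shift, sub_self]

lemma L_nonneg (A : Matrix (Fin n) (Fin n) ℝ) (hA : CyclicNonIncr A) (i j : Fin n)
    (hij : j ≠ i) : 0 ≤ A i (j - 1) - A i j :=
  sub_nonneg.2 (hA i j hij)

lemma L_diag_nonpos (A : Matrix (Fin n) (Fin n) ℝ) (hA : CyclicNonIncr A) (j : Fin n) :
    A j (j - 1) - A j j ≤ 0 := by
  have h := sum_L A j
  have h2 : 0 ≤ ∑ k ∈ Finset.univ.erase j, (A j (k - 1) - A j k) :=
    Finset.sum_nonneg (fun k hk => L_nonneg A hA j k (Finset.ne_of_mem_erase hk))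
  have h3 := Finset.add_sum_erase Finset.univ (fun k => A j (k - 1) - A j k)
    (Finset.mem_univ j)
  linarith

lemma habs (A : Matrix (Fin n) (Fin n) ℝ) (hA : CyclicNonIncr A) (z : Fin n → ℝ)
    (hz : ∀ j, ∑ i, z i * (A i (j - 1) - A i j) = 0) (j : Fin n) :
    ∑ i, |z i| * (A i (j - 1) - A i j) = 0 := by
  have hnn : ∀ j' ∈ Finset.univ, (0:ℝ) ≤ ∑ i, |z i| * (A i (j' - 1) - A i j') := by
    intro j' _
    have e1 := Finset.add_sum_erase Finset.univ
      (fun i => z i * (A i (j' - 1) - A i j')) (Finset.mem_univ j')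
    have e2 := Finset.add_sum_erase Finset.univ
      (fun i => |z i| * (A i (j' - 1) - A i j')) (Finset.mem_univ j')
    have hzj := hz j'
    have hd : z j' * (A j' (j' - 1) - A j' j')
        = -∑ i ∈ Finset.univ.erase j', z i * (A i (j' - 1) - A i j') := by
      linarith
    have h4 : |z j' * (A j' (j' - 1) - A j' j')|
        ≤ ∑ i ∈ Finset.univ.erase j', |z i| * (A i (j' - 1) - A i j') := by
      rw [hd, abs_neg]
      calc |∑ i ∈ Finset.univ.erase j', z i * (A i (j' - 1) - A i j')|
          ≤ ∑ i ∈ Finset.univ.erase j', |z i * (A i (j' - 1) - A i j')| :=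
            Finset.abs_sum_le_sum_abs _ _
        _ = ∑ i ∈ Finset.univ.erase j', |z i| * (A i (j' - 1) - A i j') := by
            refine Finset.sum_congr rfl (fun i hi => ?_)
            rw [abs_mul, abs_of_nonneg (L_nonneg A hA i j' (Finset.ne_of_mem_erase hi).symm)]
    have h5 : |z j'| * (A j' (j' - 1) - A j' j')
        = -(|z j' * (A j' (j' - 1) - A j' j')|) := by
      rw [abs_mul, abs_of_nonpos (L_diag_nonpos A hA j')]
      ring
    linarith
  have tot : ∑ j', ∑ i, |z i| * (A i (j' - 1) - A i j') = 0 := by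
    rw [Finset.sum_comm]
    refine Finset.sum_eq_zero (fun i _ => ?_)
    rw [← Finset.mul_sum, sum_L, mul_zero]
  exact (Finset.sum_eq_zero_iff_of_nonneg hnn).1 tot j (Finset.mem_univ j)

lemma prop_pos (A : Matrix (Fin n) (Fin n) ℝ) (hA : CyclicNonIncr A) (z : Fin n → ℝ)
    (hz : ∀ j, ∑ i, z i * (A i (j - 1) - A i j) = 0) {a b : Fin n}
    (hab : GraphEdge A a b) (ha : 0 < z a) : 0 < z b := by
  by_contra hb
  push_neg at hb
  have hsum : ∑ i, (|z i| + z i) * (A i (b - 1) - A i b) = 0 := by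
    simp only [add_mul]
    rw [Finset.sum_add_distrib, habs A hA z hz b, hz b, add_zero]
  have hnn : ∀ i ∈ Finset.univ, (0:ℝ) ≤ (|z i| + z i) * (A i (b - 1) - A i b) := by
    intro i _
    by_cases hib : i = b
    · subst hib
      rw [abs_of_nonpos hb]
      simp
    · exact mul_nonneg (by linarith [neg_abs_le (z i)])
        (L_nonneg A hA i b (fun h => hib h.symm))
  have ga := (Finset.sum_eq_zero_iff_of_nonneg hnn).1 hsum a (Finset.mem_univ a)
  have h1 : 0 < |z a| + z a := by linarith [abs_nonneg (z a)]
  have h2 : 0 < A a (b - 1) - A a b := sub_pos.2 hab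
  nlinarith

lemma prop_neg (A : Matrix (Fin n) (Fin n) ℝ) (hA : CyclicNonIncr A) (z : Fin n → ℝ)
    (hz : ∀ j, ∑ i, z i * (A i (j - 1) - A i j) = 0) {a b : Fin n}
    (hab : GraphEdge A a b) (ha : z a < 0) : z b < 0 := by
  by_contra hb
  push_neg at hb
  have hsum : ∑ i, (|z i| - z i) * (A i (b - 1) - A i b) = 0 := by
    simp only [sub_mul]
    rw [Finset.sum_sub_distrib, habs A hA z hz b, hz b, sub_zero]
  have hnn : ∀ i ∈ Finset.univ, (0:ℝ) ≤ (|z i| - z i) * (A i (b - 1) - A i b) := by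
    intro i _
    by_cases hib : i = b
    · subst hib
      rw [abs_of_nonneg hb]
      simp
    · exact mul_nonneg (by linarith [le_abs_self (z i)])
        (L_nonneg A hA i b (fun h => hib h.symm))
  have ga := (Finset.sum_eq_zero_iff_of_nonneg hnn).1 hsum a (Finset.mem_univ a)
  have h1 : 0 < |z a| - z a := by linarith [abs_nonneg (z a)]
  have h2 : 0 < A a (b - 1) - A a b := sub_pos.2 hab
  nlinarith

lemma path_pos (A : Matrix (Fin n) (Fin n) ℝ) (hA : CyclicNonIncr A) (z : Fin n → ℝ)
    (hz : ∀ j, ∑ i, z i * (A i (j - 1) - A i j) = 0) {a b : Fin n}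
    (h : Relation.ReflTransGen (GraphEdge A) a b) (ha : 0 < z a) : 0 < z b := by
  induction h with
  | refl => exact ha
  | tail _ e ih => exact prop_pos A hA z hz e ih

lemma path_neg (A : Matrix (Fin n) (Fin n) ℝ) (hA : CyclicNonIncr A) (z : Fin n → ℝ)
    (hz : ∀ j, ∑ i, z i * (A i (j - 1) - A i j) = 0) {a b : Fin n}
    (h : Relation.ReflTransGen (GraphEdge A) a b) (ha : z a < 0) : z b < 0 := by
  induction h with
  | refl => exact ha
  | tail _ e ih => exact prop_neg A hA z hz e ih

lemma key_tri (A : Matrix (Fin n) (Fin n) ℝ) (hA : CyclicNonIncr A)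
    (hSCC : ∀ C : Set (Fin n), IsSCC A C → C = Set.univ) (z : Fin n → ℝ)
    (hz : ∀ j, ∑ i, z i * (A i (j - 1) - A i j) = 0) :
    (∀ i, z i < 0) ∨ (∀ i, 0 < z i) ∨ z = 0 := by
  by_cases h0 : z = 0
  · exact Or.inr (Or.inr h0)
  · obtain ⟨a, ha⟩ := Function.ne_iff.1 h0
    have hconn : ∀ j, Relation.ReflTransGen (GraphEdge A) a j := by
      intro j
      have hC := hSCC {j | Conn A a j} ⟨a, rfl⟩
      have hj : j ∈ {j | Conn A a j} := hC ▸ Set.mem_univ j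
      exact hj.1
    rcases lt_or_gt_of_ne ha with h | h
    · exact Or.inl (fun j => path_neg A hA z hz (hconn j) h)
    · exact Or.inr (Or.inl (fun j => path_pos A hA z hz (hconn j) h))

end aux

lemma sol_col {n : ℕ} [NeZero n] (A : Matrix (Fin n) (Fin n) ℝ) (x : Fin n → ℝ)
    (hx : Aᵀ.mulVec x = (fun _ => (1 : ℝ))) (j : Fin n) : ∑ i, A i j * x i = 1 := by
  have h := congrFun hx j
  simpa [Matrix.mulVec, dotProduct] using h

lemma sol_hz {n : ℕ} [NeZero n] (A : Matrix (Fin n) (Fin n) ℝ) (x : Fin n → ℝ)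
    (hx : Aᵀ.mulVec x = (fun _ => (1 : ℝ))) (j : Fin n) :
    ∑ i, x i * (A i (j - 1) - A i j) = 0 := by
  have h1 := sol_col A x hx (j - 1)
  have h2 := sol_col A x hx j
  have h3 : ∑ i, x i * (A i (j - 1) - A i j)
      = ∑ i, A i (j - 1) * x i - ∑ i, A i j * x i := by
    rw [← Finset.sum_sub_distrib]
    exact Finset.sum_congr rfl (fun i _ => by ring)
  rw [h3, h1, h2, sub_self]

lemma sign_sol {n : ℕ} [NeZero n] (A : Matrix (Fin n) (Fin n) ℝ) (hA : CyclicNonIncr A)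
    (hSCC : ∀ C : Set (Fin n), IsSCC A C → C = Set.univ) (x : Fin n → ℝ)
    (hx : Aᵀ.mulVec x = (fun _ => (1 : ℝ))) :
    (∀ i, x i < 0) ∨ (∀ i, 0 < x i) := by
  rcases key_tri A hA hSCC x (sol_hz A x hx) with h | h | h
  · exact Or.inl h
  · exact Or.inr h
  · exfalso
    have h0 := sol_col A x hx 0
    subst h
    simp at h0


theorem stmt_7 (n : ℕ) [NeZero n] (hn : 1 ≤ n) (A : Matrix (Fin n) (Fin n) ℝ)
    (hA : CyclicNonIncr A)
    (hSCC : ∀ C : Set (Fin n), IsSCC A C → C = Set.univ) :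
    (∀ x y : Fin n → ℝ, Aᵀ.mulVec x = (fun _ => (1 : ℝ)) →
      Aᵀ.mulVec y = (fun _ => (1 : ℝ)) → x = y) ∧
    (∀ x : Fin n → ℝ, Aᵀ.mulVec x = (fun _ => (1 : ℝ)) →
      (∀ i, x i < 0) ∨ (∀ i, 0 < x i)) := by
  constructor
  · intro x y hx hy
    set z : Fin n → ℝ := fun i => x i - y i with hzdef
    have hzc : ∀ j, ∑ i, z i * (A i (j - 1) - A i j) = 0 := by
      intro j
      have h1 := sol_hz A x hx j
      have h2 := sol_hz A y hy j
      have h3 : ∑ i, z i * (A i (j - 1) - A i j)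
          = ∑ i, x i * (A i (j - 1) - A i j) - ∑ i, y i * (A i (j - 1) - A i j) := by
        rw [← Finset.sum_sub_distrib]
        exact Finset.sum_congr rfl (fun i _ => by ring)
      rw [h3, h1, h2, sub_self]
    have hcontra : z 0 ≠ 0 → False := by
      intro hz0
      set t : ℝ := x 0 / z 0 with htdef
      set u : Fin n → ℝ := fun i => x i - t * z i with hudef
      have hu : Aᵀ.mulVec u = (fun _ => (1 : ℝ)) := by
        funext j
        have hxc := sol_col A x hx j
        have hyc := sol_col A y hy j
        show ∑ i, Aᵀ j i * u i = 1
        have step : ∑ i, Aᵀ j i * u i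
            = ∑ i, (A i j * x i - t * (A i j * x i - A i j * y i)) :=
          Finset.sum_congr rfl (fun i _ => by
            simp only [Matrix.transpose_apply, hudef, hzdef]; ring)
        rw [step, Finset.sum_sub_distrib, ← Finset.mul_sum, Finset.sum_sub_distrib,
          hxc, hyc, sub_self, mul_zero, sub_zero]
      have hu0 : u 0 = 0 := by
        simp only [hudef, htdef]
        field_simp
        ring
      rcases sign_sol A hA hSCC u hu with h | h
      · exact absurd hu0 (ne_of_lt (h 0))
      · exact absurd hu0 (ne_of_gt (h 0))
    rcases key_tri A hA hSCC z hzc with h | h | h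
    · exact absurd (hcontra (ne_of_lt (h 0))) not_false
    · exact absurd (hcontra (ne_of_gt (h 0))) not_false
    · funext i
      have := congrFun h i
      simpa [hzdef, sub_eq_zero] using this
  · exact sign_sol A hA hSCC
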